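/- Under hyper-generalized recurrence with recurrence 1-forms A and B, if r = 0 and B(Ric₀ X) = 0 for all X ∈ V, then A(R(X,Y)ρ) = 0 for all X, Y ∈ V, where ρ is the g-dual of B and R(X,Y)ρ is determined by g(R(X,Y)ρ, W) = R(X,Y,ρ,W). (Theorem 2.5(b).) -/

import Mathlib

open scoped BigOperators

/-- Kulkarni–Nomizu product of two bilinear forms (as real-valued functions). -/
def KN {V : Type*} (h k : V → V → ℝ) (X Y Z W : V) : ℝ :=
  h X Z * k Y W + h Y W * k X Z - h X W * k Y Z - h Y Z * k X W

/-- The tensor `G(X,Y,Z,W) = g(X,Z)g(Y,W) - g(Y,Z)g(X,W)`. -/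
def Gten {V : Type*} (g : V → V → ℝ) (X Y Z W : V) : ℝ :=
  g X Z * g Y W - g Y Z * g X W

/-- Derivation action of the curvature endomorphism `Rend U V` on a quadrilinear form `T`. -/
def derAct {V : Type*} (Rend : V → V → V → V) (T : V → V → V → V → ℝ)
    (U V' X Y Z W : V) : ℝ :=
  - T (Rend U V' X) Y Z W - T X (Rend U V' Y) Z W
    - T X Y (Rend U V' Z) W - T X Y Z (Rend U V' W)

theorem hgr_zero_scalar_A_of_R_rho {V : Type*} [AddCommGroup V] [Module ℝ V]
    (n : ℕ) (hn : 3 ≤ n)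
    (b : Module.Basis (Fin n) ℝ V) (e' : Fin n → V)
    (g : V →ₗ[ℝ] V →ₗ[ℝ] ℝ)
    (hg_symm : ∀ X Y, g X Y = g Y X)
    (hg_nd : ∀ X, (∀ Y, g X Y = 0) → X = 0)
    (hdual : ∀ i j, g (b i) (e' j) = if i = j then (1 : ℝ) else 0)
    (R : V →ₗ[ℝ] V →ₗ[ℝ] V →ₗ[ℝ] V →ₗ[ℝ] ℝ)
    (hR_ne : R ≠ 0)
    (hR_anti : ∀ X Y Z W, R X Y Z W = - R Y X Z W)
    (hR_pair : ∀ X Y Z W, R X Y Z W = R Z W X Y)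
    (Ric : V → V → ℝ)
    (hRic : ∀ X Z, Ric X Z = ∑ i, R X (b i) Z (e' i))
    (r : ℝ) (hr : r = ∑ i, Ric (b i) (e' i))
    (Ric₀ : V →ₗ[ℝ] V)
    (hRic₀ : ∀ X Y, g (Ric₀ X) Y = Ric X Y)
    (D : V →ₗ[ℝ] V →ₗ[ℝ] V →ₗ[ℝ] V →ₗ[ℝ] V →ₗ[ℝ] ℝ)
    (hBianchi : ∀ X Y Z W U, D X Y Z W U + D Y Z X W U + D Z X Y W U = 0)
    (A B : V →ₗ[ℝ] ℝ) (hA : A ≠ 0) (hB : B ≠ 0)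
    (hHGR : ∀ U X Y Z W,
      D U X Y Z W = A U * R X Y Z W + B U * KN (fun a c => g a c) Ric X Y Z W)
    (hr0 : r = 0)
    (hBRic : ∀ X, B (Ric₀ X) = 0)
    (ρ : V) (hρ : ∀ X, g ρ X = B X)
    (Rend : V → V → V → V)
    (hRend : ∀ X Y Z W, g (Rend X Y Z) W = R X Y Z W)
    :
    ∀ X Y, A (Rend X Y ρ) = 0 := by
  -- coordinates via the dual basis
  have grepr : ∀ (w : V) (j : Fin n), g w (e' j) = b.repr w j := by
    intro w j
    conv_lhs => rw [← b.sum_repr w]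
    simp [hdual, Finset.sum_ite_eq', mul_ite, -Module.Basis.sum_repr]
  have pair : ∀ (f : V →ₗ[ℝ] ℝ) (w : V), ∑ i, g w (e' i) * f (b i) = f w := by
    intro f w
    conv_rhs => rw [← b.sum_repr w]
    rw [map_sum]
    refine Finset.sum_congr rfl fun i _ => ?_
    rw [grepr, map_smul, smul_eq_mul]
  have hgρ : ∀ Z : V, g Z ρ = B Z := fun Z => by rw [hg_symm, hρ]
  have hRρ0 : ∀ Z : V, Ric Z ρ = 0 := fun Z => by
    rw [← hRic₀, hg_symm, hρ, hBRic]
  intro X Y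
  have h1 : ∀ i, A X * R Y (b i) ρ (e' i) + A Y * R (b i) X ρ (e' i)
      + A (b i) * R X Y ρ (e' i) = 0 := by
    intro i
    have h := hBianchi X Y (b i) ρ (e' i)
    rw [hHGR, hHGR, hHGR] at h
    simp only [KN, hgρ, hRρ0] at h
    linear_combination h
  have h2 : ∑ i, (A X * R Y (b i) ρ (e' i) + A Y * R (b i) X ρ (e' i)
      + A (b i) * R X Y ρ (e' i)) = 0 := Finset.sum_eq_zero fun i _ => h1 i
  rw [Finset.sum_add_distrib, Finset.sum_add_distrib, ← Finset.mul_sum,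
    ← Finset.mul_sum] at h2
  have e1 : ∑ i, R Y (b i) ρ (e' i) = 0 := by rw [← hRic, hRρ0]
  have e2 : ∑ i, R (b i) X ρ (e' i) = 0 := by
    have : ∑ i, R (b i) X ρ (e' i) = ∑ i, -(R X (b i) ρ (e' i)) :=
      Finset.sum_congr rfl fun i _ => hR_anti (b i) X ρ (e' i)
    rw [this, Finset.sum_neg_distrib, ← hRic, hRρ0, neg_zero]
  have e3 : ∑ i, A (b i) * R X Y ρ (e' i) = A (Rend X Y ρ) := by
    rw [← pair A (Rend X Y ρ)]
    exact Finset.sum_congr rfl fun i _ => by rw [hRend, mul_comm]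
  rw [e1, e2, e3, mul_zero, mul_zero, zero_add, zero_add] at h2
  exact h2
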